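/- Suppose 0 ≤ α² ≤ 3 and 0 < t ≤ (1/α)√(3/2) (with the convention that the bound is vacuous if α = 0). Then F(α, t, 3) := (1 − αt√(2/3))·(1 + αt/√6)² satisfies F(α,t,3) ≥ F(√3, t, 3) = (1 − √2 t)(1 + t/√2)², i.e. F(·, t, 3) is decreasing in α on [0, √3] for fixed admissible t. -/

import Mathlib

theorem stmt_19 (α t : ℝ) (hα0 : 0 ≤ α) (hα3 : α ≤ Real.sqrt 3) (ht : 0 < t)
    (hadm : α * t ≤ Real.sqrt (3 / 2)) :
    (1 - Real.sqrt 2 * t) * (1 + t / Real.sqrt 2) ^ 2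
      ≤ (1 - α * t * Real.sqrt (2 / 3)) * (1 + α * t / Real.sqrt 6) ^ 2 ∧
    (1 - Real.sqrt 3 * t * Real.sqrt (2 / 3)) * (1 + Real.sqrt 3 * t / Real.sqrt 6) ^ 2
      = (1 - Real.sqrt 2 * t) * (1 + t / Real.sqrt 2) ^ 2 := by
  have ha : (0:ℝ) < Real.sqrt 2 := Real.sqrt_pos.mpr (by norm_num)
  have hb : (0:ℝ) < Real.sqrt 3 := Real.sqrt_pos.mpr (by norm_num)
  have ha2 : Real.sqrt 2 ^ 2 = 2 := Real.sq_sqrt (by norm_num)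
  have hb2 : Real.sqrt 3 ^ 2 = 3 := Real.sq_sqrt (by norm_num)
  have h6 : Real.sqrt 6 = Real.sqrt 2 * Real.sqrt 3 := by
    rw [← Real.sqrt_mul (by norm_num : (0:ℝ) ≤ 2)]; norm_num
  have h23 : Real.sqrt (2/3) = Real.sqrt 2 / Real.sqrt 3 := by
    rw [Real.sqrt_div' 2 (by norm_num)]
  set a := Real.sqrt 2 with hadef
  set b := Real.sqrt 3 with hbdef
  set u := α * t / (a * b) with hu
  set v := t / a with hv
  have hu0 : 0 ≤ u := by positivity
  have huv : u ≤ v := by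
    rw [hu, hv, div_le_div_iff₀ (by positivity) (by positivity)]
    nlinarith [mul_le_mul_of_nonneg_right hα3 ht.le]
  have hat : a * t = 2 * v := by
    rw [hv]; field_simp; linear_combination ha2
  have hau : α * t * (a / b) = 2 * u := by
    rw [hu]; field_simp; linear_combination α * ha2
  have hL : (1 - a * t) * (1 + t / a) ^ 2 = 1 - 3 * v ^ 2 - 2 * v ^ 3 := by
    rw [show t / a = v from rfl, hat]; ring
  have hR : (1 - α * t * (a / b)) * (1 + α * t / (a * b)) ^ 2
      = 1 - 3 * u ^ 2 - 2 * u ^ 3 := by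
    rw [show α * t / (a * b) = u from rfl, hau]; ring
  constructor
  · rw [h23, h6, hL, hR]
    nlinarith [mul_nonneg hu0 hu0, sq_nonneg (v - u), sq_nonneg (v + u)]
  · rw [h23, h6]
    have e1 : b * t * (a / b) = a * t := by field_simp
    have e2 : b * t / (a * b) = t / a := by
      field_simp
    rw [e1, e2]
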